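/- The soft pinball loss l_α^κ defined piecewise by l_α^κ(δ) = ((1−α)κ/2)((δ+κ)² − 2δ/κ − 1) for δ < −κ, (1−α)δ²/(2κ) for δ ∈ [−κ,0), αδ²/(2κ) for δ ∈ [0,κ), and (ακ/2)((δ−κ)² + 2δ/κ − 1) for δ ≥ κ, is continuously differentiable on ℝ with derivative equal to ∂l_α^κ as defined in the paper, and is convex. -/

import Mathlib

open Set

/-- The soft pinball loss `l_α^κ`. -/
noncomputable def softPinball (α κ δ : ℝ) : ℝ :=
  if δ < -κ then (1 - α) * κ / 2 * ((δ + κ) ^ 2 - 2 * δ / κ - 1)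
  else if δ < 0 then (1 - α) * δ ^ 2 / (2 * κ)
  else if δ < κ then α * δ ^ 2 / (2 * κ)
  else α * κ / 2 * ((δ - κ) ^ 2 + 2 * δ / κ - 1)

/-- The soft pinball loss derivative `∂l_α^κ`. -/
noncomputable def softPinballDeriv (α κ δ : ℝ) : ℝ :=
  if δ < -κ then (1 - α) * (κ * δ + κ ^ 2 - 1)
  else if δ < 0 then (1 - α) / κ * δ
  else if δ < κ then α / κ * δ
  else α * (κ * δ - κ ^ 2 + 1)

section Aux

variable {α κ : ℝ}

lemma sp_hd1 (hκ : κ ≠ 0) (x : ℝ) :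
    HasDerivAt (fun δ : ℝ => (1 - α) * κ / 2 * ((δ + κ) ^ 2 - 2 * δ / κ - 1))
      ((1 - α) * (κ * x + κ ^ 2 - 1)) x := by
  have h := ((((hasDerivAt_id x).add_const κ).pow 2).sub
      (((hasDerivAt_id x).const_mul 2).div_const κ)).sub_const (1:ℝ) |>.const_mul ((1 - α) * κ / 2)
  refine h.congr_deriv ?_
  field_simp
  simp only [id_eq]
  ring

lemma sp_hd2 (x : ℝ) :
    HasDerivAt (fun δ : ℝ => (1 - α) * δ ^ 2 / (2 * κ)) ((1 - α) / κ * x) x := by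
  have h := ((hasDerivAt_pow 2 x).const_mul (1 - α)).div_const (2 * κ)
  refine h.congr_deriv ?_
  field_simp
  ring

lemma sp_hd3 (x : ℝ) :
    HasDerivAt (fun δ : ℝ => α * δ ^ 2 / (2 * κ)) (α / κ * x) x := by
  have h := ((hasDerivAt_pow 2 x).const_mul α).div_const (2 * κ)
  refine h.congr_deriv ?_
  field_simp
  ring

lemma sp_hd4 (hκ : κ ≠ 0) (x : ℝ) :
    HasDerivAt (fun δ : ℝ => α * κ / 2 * ((δ - κ) ^ 2 + 2 * δ / κ - 1))
      (α * (κ * x - κ ^ 2 + 1)) x := by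
  have h := ((((hasDerivAt_id x).sub_const κ).pow 2).add
      (((hasDerivAt_id x).const_mul 2).div_const κ)).sub_const (1:ℝ) |>.const_mul (α * κ / 2)
  refine h.congr_deriv ?_
  field_simp
  simp only [id_eq]
  ring

end Aux

set_option maxHeartbeats 1000000

/-- The soft pinball loss `l_α^κ` is continuously differentiable
on `ℝ` with derivative `∂l_α^κ`, and is convex. -/
theorem softPinball_C1_and_convex
    (α κ : ℝ) (hα : α ∈ Set.Ioo (0:ℝ) 1) (hκ : κ ∈ Set.Ioc (0:ℝ) 1) :
    (∀ δ : ℝ, HasDerivAt (softPinball α κ) (softPinballDeriv α κ δ) δ) ∧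
    Continuous (softPinballDeriv α κ) ∧
    ConvexOn ℝ Set.univ (softPinball α κ) := by
  obtain ⟨hα0, hα1⟩ := hα
  obtain ⟨hκ0, hκ1⟩ := hκ
  have hκne : κ ≠ 0 := ne_of_gt hκ0
  have hκneg : -κ < 0 := by linarith
  have h1α : (0:ℝ) < 1 - α := by linarith
  -- piecewise equality lemmas
  have e1 : ∀ y : ℝ, y ≤ -κ →
      softPinball α κ y = (1 - α) * κ / 2 * ((y + κ) ^ 2 - 2 * y / κ - 1) := by
    intro y hy
    rcases eq_or_lt_of_le hy with rfl | hy'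
    · simp only [softPinball, lt_irrefl, if_false, if_pos hκneg]
      field_simp
      ring
    · simp [softPinball, hy']
  have e2 : ∀ y ∈ Icc (-κ) (0:ℝ), softPinball α κ y = (1 - α) * y ^ 2 / (2 * κ) := by
    rintro y ⟨hy1, hy2⟩
    rcases eq_or_lt_of_le hy2 with rfl | hy2'
    · simp [softPinball, not_lt.2 hy1, hκ0]
    · simp [softPinball, not_lt.2 hy1, hy2']
  have e3 : ∀ y ∈ Icc (0:ℝ) κ, softPinball α κ y = α * y ^ 2 / (2 * κ) := by
    rintro y ⟨hy1, hy2⟩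
    have hy0 : ¬ y < -κ := not_lt.2 (by linarith)
    rcases eq_or_lt_of_le hy2 with rfl | hy2'
    · simp only [softPinball, if_neg hy0, if_neg (not_lt.2 hy1), lt_irrefl, if_false]
      field_simp
      ring
    · simp [softPinball, hy0, not_lt.2 hy1, hy2']
  have e4 : ∀ y : ℝ, κ ≤ y →
      softPinball α κ y = α * κ / 2 * ((y - κ) ^ 2 + 2 * y / κ - 1) := by
    intro y hy
    have h0 : ¬ y < 0 := not_lt.2 (by linarith)
    have hmk : ¬ y < -κ := not_lt.2 (by linarith)
    simp [softPinball, hmk, h0, not_lt.2 hy]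
  -- the derivative claim
  have key : ∀ δ : ℝ, HasDerivAt (softPinball α κ) (softPinballDeriv α κ δ) δ := by
    intro δ
    rcases lt_trichotomy δ (-κ) with h | h | h
    · have hval : softPinballDeriv α κ δ = (1 - α) * (κ * δ + κ ^ 2 - 1) := by
        simp [softPinballDeriv, h]
      rw [hval]
      refine (sp_hd1 hκne δ).congr_of_eventuallyEq ?_
      filter_upwards [Iio_mem_nhds h] with x hx
      exact e1 x (le_of_lt hx)
    · subst h
      have hval : softPinballDeriv α κ (-κ) = -(1 - α) := by
        simp only [softPinballDeriv, lt_irrefl, if_false, if_pos hκneg]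
        field_simp
      rw [hval]
      have hL : HasDerivWithinAt (softPinball α κ) (-(1 - α)) (Iic (-κ)) (-κ) := by
        have h' := (sp_hd1 (α := α) hκne (-κ)).hasDerivWithinAt (s := Iic (-κ))
        have hv : (1 - α) * (κ * -κ + κ ^ 2 - 1) = -(1 - α) := by ring
        rw [hv] at h'
        exact h'.congr (fun y hy => e1 y hy) (e1 (-κ) le_rfl)
      have hR : HasDerivWithinAt (softPinball α κ) (-(1 - α)) (Icc (-κ) 0) (-κ) := by
        have h' := (sp_hd2 (α := α) (κ := κ) (-κ)).hasDerivWithinAt (s := Icc (-κ) 0)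
        have hv : (1 - α) / κ * -κ = -(1 - α) := by field_simp
        rw [hv] at h'
        exact h'.congr (fun y hy => e2 y hy) (e2 (-κ) ⟨le_rfl, le_of_lt hκneg⟩)
      have hU := hL.union hR
      rw [Iic_union_Icc_eq_Iic (le_of_lt hκneg)] at hU
      exact hU.hasDerivAt (Iic_mem_nhds hκneg)
    · rcases lt_trichotomy δ 0 with h0 | h0 | h0
      · have hval : softPinballDeriv α κ δ = (1 - α) / κ * δ := by
          simp [softPinballDeriv, not_lt.2 (le_of_lt h), h0]
        rw [hval]
        refine (sp_hd2 δ).congr_of_eventuallyEq ?_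
        filter_upwards [Ioo_mem_nhds h h0] with x hx
        exact e2 x ⟨le_of_lt hx.1, le_of_lt hx.2⟩
      · subst h0
        have hval : softPinballDeriv α κ 0 = 0 := by
          simp [softPinballDeriv, not_lt.2 (le_of_lt h), hκ0]
        rw [hval]
        have hL : HasDerivWithinAt (softPinball α κ) 0 (Icc (-κ) 0) 0 := by
          have h' := (sp_hd2 (α := α) (κ := κ) 0).hasDerivWithinAt (s := Icc (-κ) 0)
          rw [show (1 - α) / κ * 0 = 0 by ring] at h'
          exact h'.congr (fun y hy => e2 y hy) (e2 0 ⟨le_of_lt hκneg, le_rfl⟩)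
        have hR : HasDerivWithinAt (softPinball α κ) 0 (Icc 0 κ) 0 := by
          have h' := (sp_hd3 (α := α) (κ := κ) 0).hasDerivWithinAt (s := Icc 0 κ)
          rw [show α / κ * 0 = 0 by ring] at h'
          exact h'.congr (fun y hy => e3 y hy) (e3 0 ⟨le_rfl, le_of_lt hκ0⟩)
        have hU := hL.union hR
        rw [Icc_union_Icc_eq_Icc (le_of_lt hκneg) (le_of_lt hκ0)] at hU
        exact hU.hasDerivAt (Icc_mem_nhds hκneg hκ0)
      · rcases lt_trichotomy δ κ with h2 | h2 | h2
        · have hval : softPinballDeriv α κ δ = α / κ * δ := by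
            simp [softPinballDeriv, not_lt.2 (le_of_lt h), not_lt.2 (le_of_lt h0), h2]
          rw [hval]
          refine (sp_hd3 δ).congr_of_eventuallyEq ?_
          filter_upwards [Ioo_mem_nhds h0 h2] with x hx
          exact e3 x ⟨le_of_lt hx.1, le_of_lt hx.2⟩
        · rw [h2]
          have hval : softPinballDeriv α κ κ = α := by
            have : ¬ κ < -κ := not_lt.2 (by linarith)
            simp only [softPinballDeriv, if_neg this, if_neg (not_lt.2 (le_of_lt hκ0)),
              lt_irrefl, if_false]
            ring
          rw [hval]
          have hL : HasDerivWithinAt (softPinball α κ) α (Icc 0 κ) κ := by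
            have h' := (sp_hd3 (α := α) (κ := κ) κ).hasDerivWithinAt (s := Icc 0 κ)
            rw [show α / κ * κ = α by field_simp] at h'
            exact h'.congr (fun y hy => e3 y hy) (e3 κ ⟨le_of_lt hκ0, le_rfl⟩)
          have hR : HasDerivWithinAt (softPinball α κ) α (Ici κ) κ := by
            have h' := (sp_hd4 (α := α) hκne κ).hasDerivWithinAt (s := Ici κ)
            rw [show α * (κ * κ - κ ^ 2 + 1) = α by ring] at h'
            exact h'.congr (fun y hy => e4 y hy) (e4 κ le_rfl)
          have hU := hL.union hR
          rw [Icc_union_Ici_eq_Ici (le_of_lt hκ0)] at hU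
          exact hU.hasDerivAt (Ici_mem_nhds hκ0)
        · have hval : softPinballDeriv α κ δ = α * (κ * δ - κ ^ 2 + 1) := by
            simp [softPinballDeriv, not_lt.2 (le_of_lt h), not_lt.2 (le_of_lt h0),
              not_lt.2 (le_of_lt h2)]
          rw [hval]
          refine (sp_hd4 hκne δ).congr_of_eventuallyEq ?_
          filter_upwards [Ioi_mem_nhds h2] with x hx
          exact e4 x (le_of_lt hx)
  -- continuity of the derivative
  have hC : Continuous (softPinballDeriv α κ) := by
    have hrw : softPinballDeriv α κ = fun δ =>
        if -κ ≤ δ then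
          (if (0:ℝ) ≤ δ then (if κ ≤ δ then α * (κ * δ - κ ^ 2 + 1) else α / κ * δ)
           else (1 - α) / κ * δ)
        else (1 - α) * (κ * δ + κ ^ 2 - 1) := by
      funext δ
      simp only [softPinballDeriv]
      rcases lt_or_ge δ (-κ) with h | h
      · rw [if_pos h, if_neg (not_le.2 h)]
      · rw [if_neg (not_lt.2 h), if_pos h]
        rcases lt_or_ge δ 0 with h2 | h2
        · rw [if_pos h2, if_neg (not_le.2 h2)]
        · rw [if_neg (not_lt.2 h2), if_pos h2]
          rcases lt_or_ge δ κ with h3 | h3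
          · rw [if_pos h3, if_neg (not_le.2 h3)]
          · rw [if_neg (not_lt.2 h3), if_pos h3]
    rw [hrw]
    have c1 : Continuous (fun δ : ℝ => (1 - α) * (κ * δ + κ ^ 2 - 1)) := by fun_prop
    have c2 : Continuous (fun δ : ℝ => (1 - α) / κ * δ) := by fun_prop
    have c3 : Continuous (fun δ : ℝ => α / κ * δ) := by fun_prop
    have c4 : Continuous (fun δ : ℝ => α * (κ * δ - κ ^ 2 + 1)) := by fun_prop
    have cin : Continuous (fun δ : ℝ =>
        if κ ≤ δ then α * (κ * δ - κ ^ 2 + 1) else α / κ * δ) := by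
      refine Continuous.if_le c4 c3 continuous_const continuous_id ?_
      rintro x rfl
      field_simp
      ring
    have cmid : Continuous (fun δ : ℝ =>
        if (0:ℝ) ≤ δ then (if κ ≤ δ then α * (κ * δ - κ ^ 2 + 1) else α / κ * δ)
        else (1 - α) / κ * δ) := by
      refine Continuous.if_le cin c2 continuous_const continuous_id ?_
      rintro x rfl
      rw [if_neg (not_le.2 hκ0)]
      ring
    refine Continuous.if_le cmid c1 continuous_const continuous_id ?_
    rintro x rfl
    rw [if_neg (not_le.2 hκneg)]
    field_simp
    ring
  refine ⟨key, hC, ?_⟩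
  -- convexity
  have hderiv : deriv (softPinball α κ) = softPinballDeriv α κ :=
    funext fun δ => (key δ).deriv
  refine Monotone.convexOn_univ_of_deriv (fun δ => (key δ).differentiableAt) ?_
  rw [hderiv]
  intro x y hxy
  rw [← mul_le_mul_iff_right₀ hκ0]
  have hcan : ∀ c z : ℝ, κ * (c / κ * z) = c * z := fun c z => by field_simp
  simp only [softPinballDeriv]
  split_ifs <;> (try simp only [hcan]) <;>
    nlinarith [mul_pos h1α (mul_pos hκ0 hκ0), mul_pos hα0 (mul_pos hκ0 hκ0),
      mul_pos h1α hκ0, mul_pos hα0 hκ0, h1α.le, hα0.le, hxy, hκ1, hκ0.le]
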